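/- In an abelian category, if a commutative square b∘f = g∘a is a pushout, then the induced maps Ker(a) → Ker(b) and Ker(f) → Ker(g) are epimorphisms. -/

import Mathlib

open CategoryTheory Limits

open CategoryTheory.Abelian.Pseudoelement in
private lemma aux_epi_kernel_map {𝒜 : Type*} [Category 𝒜] [Abelian 𝒜]
    {A B C D : 𝒜} (a : A ⟶ C) (f : A ⟶ B) (b : B ⟶ D) (g : C ⟶ D)
    (h : IsPushout f a b g) (w : a ≫ g = f ≫ b) :
    Epi (kernel.map a b f g w) := by
  -- the short complex A ⟶ B ⊞ C ⟶ D is exact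
  let S : ShortComplex 𝒜 := ShortComplex.mk (biprod.lift f (-a)) (biprod.desc b g)
    (by simp [h.w])
  have hcolim : IsColimit (CokernelCofork.ofπ S.g S.zero) := by
    have := h.isColimit
    exact IsColimit.ofIsoColimit ((CommSq.isColimitEquivIsColimitCokernelCofork h.toCommSq) this)
      (Cofork.ext (Iso.refl _) (by simp; rfl))
  have hS : S.Exact := S.exact_of_g_is_cokernel hcolim
  -- kernel exactness for a
  have hKa : (ShortComplex.mk (kernel.ι a) a (kernel.condition a)).Exact :=
    ShortComplex.exact_of_f_is_kernel _ (kernelIsKernel a)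
  apply epi_of_pseudo_surjective
  intro x
  -- consider the pseudoelement y = (kernel.ι b ≫ biprod.inl) x
  set y : (Abelian.Pseudoelement (B ⊞ C)) := pseudoApply (kernel.ι b ≫ biprod.inl) x with hy
  have hy0 : pseudoApply S.g y = 0 := by
    rw [hy, ← Abelian.Pseudoelement.comp_apply]
    have hz : (kernel.ι b ≫ biprod.inl) ≫ S.g = 0 := by simp [S]
    rw [hz, Abelian.Pseudoelement.zero_apply]
  obtain ⟨t, ht⟩ := pseudo_exact_of_exact hS y hy0
  -- f t = kernel.ι b x
  have hft : pseudoApply f t = pseudoApply (kernel.ι b) x := by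
    have h1 : pseudoApply biprod.fst (pseudoApply S.f t) =
        pseudoApply biprod.fst y := by rw [ht]
    rw [← Abelian.Pseudoelement.comp_apply, ← Abelian.Pseudoelement.comp_apply] at h1
    simpa [S, hy, Abelian.Pseudoelement.comp_apply] using h1
  -- a t = 0
  have hat : pseudoApply a t = 0 := by
    have h2 : pseudoApply biprod.snd (pseudoApply S.f t) =
        pseudoApply biprod.snd y := by rw [ht]
    rw [← Abelian.Pseudoelement.comp_apply, ← Abelian.Pseudoelement.comp_apply] at h2
    have h3 : pseudoApply (-a) t = 0 := by
      have : (kernel.ι b ≫ biprod.inl) ≫ (biprod.snd : B ⊞ C ⟶ C) = 0 := by simp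
      rw [show S.f ≫ (biprod.snd : B ⊞ C ⟶ C) = -a by simp [S], this, Abelian.Pseudoelement.zero_apply] at h2
      exact h2
    have h4 : pseudoApply (a ≫ (-𝟙 C)) t = 0 := by
      simpa using h3
    rw [Abelian.Pseudoelement.comp_apply] at h4
    have hinj : Function.Injective (pseudoApply (-𝟙 C)) := by
      have : Mono (-𝟙 C) := by
        have : IsIso (-𝟙 C) := ⟨-𝟙 C, by simp, by simp⟩
        infer_instance
      exact pseudo_injective_of_mono _
    apply hinj
    rw [h4, apply_zero]
  -- lift t to the kernel of a
  obtain ⟨u, hu⟩ := pseudo_exact_of_exact hKa t hat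
  refine ⟨u, ?_⟩
  apply pseudo_injective_of_mono (kernel.ι b)
  rw [← Abelian.Pseudoelement.comp_apply, kernel.lift_ι, Abelian.Pseudoelement.comp_apply, hu, hft]

/-- In an abelian category, if a commutative square `f ≫ b = a ≫ g` is a pushout,
then the induced maps `Ker a ⟶ Ker b` and `Ker f ⟶ Ker g` are epimorphisms. -/
theorem stmt3 {𝒜 : Type*} [Category 𝒜] [Abelian 𝒜]
    {A B C D : 𝒜} (a : A ⟶ C) (f : A ⟶ B) (b : B ⟶ D) (g : C ⟶ D)
    (h : IsPushout f a b g) :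
    Epi (kernel.map a b f g h.w.symm) ∧ Epi (kernel.map f g a b h.w) := by
  exact ⟨aux_epi_kernel_map a f b g h _, aux_epi_kernel_map f a g b h.flip _⟩
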